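/- arXiv:1201.0874 — 2 statements merged into one kernel-verified Lean document; each statement's English description precedes it below -/
import Mathlib

section
/- For every closed term t of λ_S, exactly one of the following holds: t is a value, or t is a stuck term, or there exist a unique redex r and a unique evaluation context F such that t = F[r]. Consequently the reduction relation is deterministic. -/
namespace LamS

/-- Terms of the λ-calculus with shift and reset, in de Bruijn representation.
    `lam` and `shift` bind variable 0. -/
inductive Tm : Type
  | var : ℕ → Tm
  | lam : Tm → Tm
  | app : Tm → Tm → Tm
  | shift : Tm → Tm
  | reset : Tm → Tm
  deriving DecidableEq

open Tm

/-- Lift (shift up) free de Bruijn indices `≥ c` by `d`. -/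
def liftT (d : ℕ) : ℕ → Tm → Tm
  | c, var n => if n < c then var n else var (n + d)
  | c, lam t => lam (liftT d (c+1) t)
  | c, app a b => app (liftT d c a) (liftT d c b)
  | c, shift t => shift (liftT d (c+1) t)
  | c, reset t => reset (liftT d c t)

/-- Capture-avoiding substitution `t[j := s]` (de Bruijn). -/
def substT : ℕ → Tm → Tm → Tm
  | j, s, var n => if n = j then liftT j 0 s else if j < n then var (n-1) else var n
  | j, s, lam t => lam (substT (j+1) s t)
  | j, s, app a b => app (substT j s a) (substT j s b)
  | j, s, shift t => shift (substT (j+1) s t)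
  | j, s, reset t => reset (substT j s t)

/-- Values are λ-abstractions. -/
def IsValue (t : Tm) : Prop := ∃ b, t = lam b

/-- All free variables are `< n`. -/
def ClosedUnder : ℕ → Tm → Prop
  | n, var m => m < n
  | n, lam t => ClosedUnder (n+1) t
  | n, app a b => ClosedUnder n a ∧ ClosedUnder n b
  | n, shift t => ClosedUnder (n+1) t
  | n, reset t => ClosedUnder n t

def Closed (t : Tm) : Prop := ClosedUnder 0 t

/-- Pure evaluation contexts, interpreted inside-out:
    `appV b E` is `E[(λ.b) []]` and `appL E t` is `E[[] t]`. -/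
inductive PCtx : Type
  | hole : PCtx
  | appV : Tm → PCtx → PCtx
  | appL : PCtx → Tm → PCtx
  deriving DecidableEq

def PCtx.plug : PCtx → Tm → Tm
  | .hole, t => t
  | .appV b E, t => E.plug (app (lam b) t)
  | .appL E s, t => E.plug (app t s)

def PCtx.liftC (d : ℕ) : ℕ → PCtx → PCtx
  | _, .hole => .hole
  | c, .appV b E => .appV (liftT d (c+1) b) (PCtx.liftC d c E)
  | c, .appL E s => .appL (PCtx.liftC d c E) (liftT d c s)

/-- Composition of pure contexts: `(E.comp E').plug t = E.plug (E'.plug t)`. -/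
def PCtx.comp : PCtx → PCtx → PCtx
  | E, .hole => E
  | E, .appV b E' => .appV b (E.comp E')
  | E, .appL E' s => .appL (E.comp E') s

/-- The captured delimited continuation `λx.⟨E[x]⟩`. -/
def contOf (E : PCtx) : Tm := lam (reset ((PCtx.liftC 1 0 E).plug (var 0)))

/-- Call-by-value evaluation contexts, interpreted inside-out. -/
inductive ECtx : Type
  | hole : ECtx
  | appV : Tm → ECtx → ECtx
  | appL : ECtx → Tm → ECtx
  | resetC : ECtx → ECtx
  deriving DecidableEq

def ECtx.plug : ECtx → Tm → Tm
  | .hole, t => t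
  | .appV b F, t => F.plug (app (lam b) t)
  | .appL F s, t => F.plug (app t s)
  | .resetC F, t => F.plug (reset t)

def ClosedECtx : ECtx → Prop
  | .hole => True
  | .appV b F => ClosedUnder 1 b ∧ ClosedECtx F
  | .appL F s => ClosedECtx F ∧ Closed s
  | .resetC F => ClosedECtx F

/-- One-step reduction of λ_S. -/
inductive Red : Tm → Tm → Prop
  | beta (F : ECtx) (t v : Tm) (hv : IsValue v) :
      Red (F.plug (app (lam t) v)) (F.plug (substT 0 v t))
  | cap (F : ECtx) (E : PCtx) (t : Tm) :
      Red (F.plug (reset (E.plug (shift t)))) (F.plug (reset (substT 0 (contOf E) t)))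
  | res (F : ECtx) (v : Tm) (hv : IsValue v) :
      Red (F.plug (reset v)) (F.plug v)

def RedStar : Tm → Tm → Prop := Relation.ReflTransGen Red

/-- A term is stuck if it is not a value and cannot reduce. -/
def Stuck (t : Tm) : Prop := ¬ IsValue t ∧ ∀ u, ¬ Red t u

/-- Evaluation: reduce to an irreducible term. -/
def Eval (t t' : Tm) : Prop := RedStar t t' ∧ ∀ u, ¬ Red t' u

def IsRedex (r : Tm) : Prop :=
  (∃ t v, IsValue v ∧ r = app (lam t) v) ∨
  (∃ E s, r = reset (PCtx.plug E (shift s))) ∨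
  (∃ v, IsValue v ∧ r = reset v)

/-- Labels of the LTS. -/
inductive Label : Type
  | tau : Label
  | val : Tm → Label
  | ctx : PCtx → Label

/-- The labelled transition system for λ_S. -/
inductive Step : Tm → Label → Tm → Prop
  | beta {t v : Tm} (hv : IsValue v) :
      Step (app (lam t) v) .tau (substT 0 v t)
  | resetVal {v : Tm} (hv : IsValue v) :
      Step (reset v) .tau v
  | appL {t0 t0' t1 : Tm} :
      Step t0 .tau t0' → Step (app t0 t1) .tau (app t0' t1)
  | appR {v t t' : Tm} (hv : IsValue v) :
      Step t .tau t' → Step (app v t) .tau (app v t')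
  | resetT {t t' : Tm} :
      Step t .tau t' → Step (reset t) .tau (reset t')
  | resetCap {t t' : Tm} :
      Step t (.ctx .hole) t' → Step (reset t) .tau t'
  | lamApp {t v : Tm} (hv : IsValue v) :
      Step (lam t) (.val v) (substT 0 v t)
  | shiftCap {t : Tm} (E : PCtx) :
      Step (shift t) (.ctx E) (reset (substT 0 (contOf E) t))
  | capL {t0 t0' t1 : Tm} {E : PCtx} :
      Step t0 (.ctx (.appL E t1)) t0' → Step (app t0 t1) (.ctx E) t0'
  | capR {b t t' : Tm} {E : PCtx} :
      Step t (.ctx (.appV b E)) t' → Step (app (lam b) t) (.ctx E) t'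

def TauStar : Tm → Tm → Prop := Relation.ReflTransGen (fun a b => Step a .tau b)

/-- Weak delay transition: τ-steps, then an `l`-step if `l ≠ τ`. -/
def Weak (t : Tm) (l : Label) (t' : Tm) : Prop :=
  match l with
  | .tau => TauStar t t'
  | _ => ∃ u, TauStar t u ∧ Step u l t'

/-- Applicative simulation. -/
def IsSim (R : Tm → Tm → Prop) : Prop :=
  ∀ ⦃t0 t1⦄, R t0 t1 → ∀ ⦃l t0'⦄, Step t0 l t0' →
    ∃ t1', Weak t1 l t1' ∧ R t0' t1'

def IsBisim (R : Tm → Tm → Prop) : Prop := IsSim R ∧ IsSim (flip R)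

/-- Applicative bisimilarity: the largest applicative bisimulation. -/
def Bisim (t0 t1 : Tm) : Prop := ∃ R, IsBisim R ∧ R t0 t1

/-- Big-step applicative simulation. -/
def IsBigSim (R : Tm → Tm → Prop) : Prop :=
  ∀ ⦃t0 t1⦄, R t0 t1 → ∀ ⦃l t0'⦄, l ≠ Label.tau → Weak t0 l t0' →
    ∃ t1', Weak t1 l t1' ∧ R t0' t1'

def IsBigBisim (R : Tm → Tm → Prop) : Prop := IsBigSim R ∧ IsBigSim (flip R)

/-- Big-step applicative bisimilarity. -/
def BigBisim (t0 t1 : Tm) : Prop := ∃ R, IsBigBisim R ∧ R t0 t1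

/-- General contexts. -/
inductive Ctx : Type
  | hole : Ctx
  | lam : Ctx → Ctx
  | appL : Ctx → Tm → Ctx
  | appR : Tm → Ctx → Ctx
  | shift : Ctx → Ctx
  | reset : Ctx → Ctx

/-- Plugging a term in a general context (free variables may be captured). -/
def Ctx.plug : Ctx → Tm → Tm
  | .hole, t => t
  | .lam C, t => Tm.lam (C.plug t)
  | .appL C s, t => Tm.app (C.plug t) s
  | .appR s C, t => Tm.app s (C.plug t)
  | .shift C, t => Tm.shift (C.plug t)
  | .reset C, t => Tm.reset (C.plug t)

def CtxClosedUnder : ℕ → Ctx → Prop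
  | _, .hole => True
  | n, .lam C => CtxClosedUnder (n+1) C
  | n, .appL C s => CtxClosedUnder n C ∧ ClosedUnder n s
  | n, .appR s C => ClosedUnder n s ∧ CtxClosedUnder n C
  | n, .shift C => CtxClosedUnder (n+1) C
  | n, .reset C => CtxClosedUnder n C

def ClosedCtx (C : Ctx) : Prop := CtxClosedUnder 0 C

def EvalsToValue (t : Tm) : Prop := ∃ v, IsValue v ∧ Eval t v

def EvalsToStuck (t : Tm) : Prop := ∃ s, Stuck s ∧ Eval t s

/-- Contextual equivalence on closed terms. -/
def CtxEquiv (t0 t1 : Tm) : Prop :=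
  ∀ C : Ctx, ClosedCtx C →
    (EvalsToValue (C.plug t0) ↔ EvalsToValue (C.plug t1)) ∧
    (EvalsToStuck (C.plug t0) ↔ EvalsToStuck (C.plug t1))

/-- Contextual equivalence restricted to evaluation contexts. -/
def ECtxEquiv (t0 t1 : Tm) : Prop :=
  ∀ F : ECtx, ClosedECtx F →
    (EvalsToValue (F.plug t0) ↔ EvalsToValue (F.plug t1)) ∧
    (EvalsToStuck (F.plug t0) ↔ EvalsToStuck (F.plug t1))

/-- Lifting a substitution under a binder. -/
def liftSub (σ : ℕ → Tm) : ℕ → Tm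
  | 0 => var 0
  | n+1 => liftT 1 0 (σ n)

/-- Apply a substitution to all free variables of a term. -/
def applySub (σ : ℕ → Tm) : Tm → Tm
  | var n => σ n
  | lam t => lam (applySub (liftSub σ) t)
  | app a b => app (applySub σ a) (applySub σ b)
  | shift t => shift (applySub (liftSub σ) t)
  | reset t => reset (applySub σ t)

/-- A closing substitution maps every variable to a closed value. -/
def ClosingSub (σ : ℕ → Tm) : Prop := ∀ n, IsValue (σ n) ∧ Closed (σ n)

/-- Open extension of a relation on closed terms. -/
def OpenExt (R : Tm → Tm → Prop) (t0 t1 : Tm) : Prop :=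
  ∀ σ, ClosingSub σ → R (applySub σ t0) (applySub σ t1)

/-- Howe's closure of applicative bisimilarity (compatible refinement rules inlined). -/
inductive Howe : Tm → Tm → Prop
  | base {t0 t1} : OpenExt Bisim t0 t1 → Howe t0 t1
  | right {t0 t2 t1} : Howe t0 t2 → OpenExt Bisim t2 t1 → Howe t0 t1
  | compVar (n : ℕ) : Howe (var n) (var n)
  | compLam {t0 t1} : Howe t0 t1 → Howe (lam t0) (lam t1)
  | compApp {a0 a1 b0 b1} : Howe a0 a1 → Howe b0 b1 → Howe (app a0 b0) (app a1 b1)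
  | compShift {t0 t1} : Howe t0 t1 → Howe (shift t0) (shift t1)
  | compReset {t0 t1} : Howe t0 t1 → Howe (reset t0) (reset t1)

/-- Howe's closure restricted to closed terms. -/
def HoweC (t0 t1 : Tm) : Prop := Closed t0 ∧ Closed t1 ∧ Howe t0 t1

/-- Extension of Howe's closure to pure contexts. -/
inductive PCtxHowe : PCtx → PCtx → Prop
  | hole : PCtxHowe .hole .hole
  | appV {b0 b1 E0 E1} : Howe b0 b1 → PCtxHowe E0 E1 → PCtxHowe (.appV b0 E0) (.appV b1 E1)
  | appL {E0 E1 t0 t1} : PCtxHowe E0 E1 → Howe t0 t1 → PCtxHowe (.appL E0 t0) (.appL E1 t1)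

/-- Extension of Howe's closure to labels. -/
def LabHowe : Label → Label → Prop
  | .tau, .tau => True
  | .val v0, .val v1 => Closed v0 ∧ Closed v1 ∧ Howe v0 v1
  | .ctx E0, .ctx E1 => PCtxHowe E0 E1
  | _, _ => False

/-- ω = λx. x x -/
def omegaTm : Tm := lam (app (var 0) (var 0))

/-- Ω = ω ω, the standard diverging term. -/
def OmegaTm : Tm := app omegaTm omegaTm

/-- Every τ-reachable term can do a τ-step: only infinite τ-sequences. -/
def Diverges (t : Tm) : Prop := ∀ u, TauStar t u → ∃ u', Step u .tau u'

/-- No weak non-τ transition. -/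
def NoObs (t : Tm) : Prop := ∀ l t', l ≠ Label.tau → ¬ Weak t l t'

end LamS
namespace LamS
open Tm

/-- Composition of evaluation contexts: `(compE F G).plug t = F.plug (G.plug t)`. -/
def compE : ECtx → ECtx → ECtx
  | F, .hole => F
  | F, .appV b G => .appV b (compE F G)
  | F, .appL G s => .appL (compE F G) s
  | F, .resetC G => .resetC (compE F G)

lemma compE_plug (F G : ECtx) (t : Tm) : (compE F G).plug t = F.plug (G.plug t) := by
  induction G generalizing t <;> simp [compE, ECtx.plug, *]

lemma compE_hole_left (G : ECtx) : compE .hole G = G := by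
  induction G <;> simp [compE, *]

lemma compE_assoc (A B C : ECtx) : compE (compE A B) C = compE A (compE B C) := by
  induction C <;> simp [compE, *]

lemma compP_plug (A B : PCtx) (t : Tm) : (A.comp B).plug t = A.plug (B.plug t) := by
  induction B generalizing t <;> simp [PCtx.comp, PCtx.plug, *]

lemma compP_hole_left (B : PCtx) : PCtx.comp .hole B = B := by
  induction B <;> simp [PCtx.comp, *]

lemma compP_assoc (A B C : PCtx) : (A.comp B).comp C = A.comp (B.comp C) := by
  induction C <;> simp [PCtx.comp, *]

inductive DRes : Type
  | val : Tm → DRes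
  | stuck : PCtx → Tm → DRes
  | red : ECtx → Tm → DRes
  | bad : DRes

def decompose : Tm → DRes
  | .var _ => .bad
  | .lam b => .val b
  | .shift s => .stuck .hole s
  | .app a b =>
      match decompose a with
      | .val a' =>
          match decompose b with
          | .val _ => .red .hole (app a b)
          | .stuck E s => .stuck (PCtx.comp (.appV a' .hole) E) s
          | .red F r => .red (compE (.appV a' .hole) F) r
          | .bad => .bad
      | .stuck E s => .stuck (PCtx.comp (.appL .hole b) E) s
      | .red F r => .red (compE (.appL .hole b) F) r
      | .bad => .bad
  | .reset u =>
      match decompose u with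
      | .val _ => .red .hole (reset u)
      | .stuck _ _ => .red .hole (reset u)
      | .red F r => .red (compE (.resetC .hole) F) r
      | .bad => .bad

lemma decompose_sound (t : Tm) :
    (∀ b, decompose t = .val b → t = lam b) ∧
    (∀ E s, decompose t = .stuck E s → t = E.plug (shift s)) ∧
    (∀ F r, decompose t = .red F r → IsRedex r ∧ t = F.plug r) := by
  induction t with
  | var n => refine ⟨fun b h => ?_, fun E s h => ?_, fun F r h => ?_⟩ <;> simp [decompose] at h
  | lam b =>
      refine ⟨fun b' h => ?_, fun E s h => ?_, fun F r h => ?_⟩ <;> simp [decompose] at h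
      rw [h]
  | shift s =>
      refine ⟨fun b' h => ?_, fun E s' h => ?_, fun F r h => ?_⟩ <;> simp [decompose] at h
      rw [← h.1, ← h.2]; rfl
  | app a b iha ihb =>
      obtain ⟨iva, isa, ira⟩ := iha
      obtain ⟨ivb, isb, irb⟩ := ihb
      refine ⟨fun b' h => ?_, fun E s h => ?_, fun F r h => ?_⟩ <;>
        unfold decompose at h <;>
        cases hda : decompose a <;> rw [hda] at h
      -- goal 1 (val): 4 subcases on decompose a
      · cases hdb : decompose b <;> rw [hdb] at h <;> cases h
      · cases h
      · cases h
      · cases h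
      -- goal 2 (stuck)
      · cases hdb : decompose b <;> rw [hdb] at h <;> cases h
        rw [compP_plug, ← isb _ _ hdb, iva _ hda]; rfl
      · cases h
        rw [compP_plug, ← isa _ _ hda]; rfl
      · cases h
      · cases h
      -- goal 3 (red)
      · cases hdb : decompose b <;> rw [hdb] at h <;> cases h
        · refine ⟨Or.inl ⟨_, b, ⟨_, ivb _ hdb⟩, by rw [iva _ hda]⟩, rfl⟩
        · obtain ⟨hr, hp⟩ := irb _ _ hdb
          exact ⟨hr, by rw [compE_plug, ← hp, iva _ hda]; rfl⟩
      · cases h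
      · cases h
        obtain ⟨hr, hp⟩ := ira _ _ hda
        exact ⟨hr, by rw [compE_plug, ← hp]; rfl⟩
      · cases h
  | reset u ihu =>
      obtain ⟨ivu, isu, iru⟩ := ihu
      refine ⟨fun b' h => ?_, fun E s h => ?_, fun F r h => ?_⟩ <;>
        unfold decompose at h <;>
        cases hdu : decompose u <;> rw [hdu] at h <;> cases h
      · exact ⟨Or.inr (Or.inr ⟨u, ⟨_, ivu _ hdu⟩, rfl⟩), rfl⟩
      · exact ⟨Or.inr (Or.inl ⟨_, _, by rw [isu _ _ hdu]⟩), rfl⟩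
      · obtain ⟨hr, hp⟩ := iru _ _ hdu
        exact ⟨hr, by rw [compE_plug, ← hp]; rfl⟩

lemma decompose_not_bad (t : Tm) (ht : ClosedUnder 0 t) : decompose t ≠ .bad := by
  induction t with
  | var n => simp [ClosedUnder] at ht
  | lam b => simp [decompose]
  | shift s => simp [decompose]
  | app a b iha ihb =>
      obtain ⟨ha, hb⟩ := ht
      unfold decompose
      cases hda : decompose a <;> cases hdb : decompose b <;>
        simp_all
  | reset u ihu =>
      unfold decompose
      cases hdu : decompose u <;> simp_all [ClosedUnder]

lemma Mstuck (E : PCtx) : ∀ u E₁ s, decompose u = .stuck E₁ s →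
    decompose (E.plug u) = .stuck (E.comp E₁) s := by
  induction E with
  | hole => intro u E₁ s h; simpa [PCtx.plug, compP_hole_left] using h
  | appV b E ih =>
      intro u E₁ s h
      have hu : decompose (app (lam b) u) = .stuck (PCtx.comp (.appV b .hole) E₁) s := by
        simp only [decompose, h]
      have := ih _ _ _ hu
      rw [PCtx.plug]
      rw [this, ← compP_assoc]
      simp [PCtx.comp]
  | appL E t ih =>
      intro u E₁ s h
      have hu : decompose (app u t) = .stuck (PCtx.comp (.appL .hole t) E₁) s := by
        simp only [decompose, h]
      have := ih _ _ _ hu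
      rw [PCtx.plug]
      rw [this, ← compP_assoc]
      simp [PCtx.comp]

lemma Mred (F : ECtx) : ∀ u G r, decompose u = .red G r →
    decompose (F.plug u) = .red (compE F G) r := by
  induction F with
  | hole => intro u G r h; simpa [ECtx.plug, compE_hole_left] using h
  | appV b F ih =>
      intro u G r h
      have hu : decompose (app (lam b) u) = .red (compE (.appV b .hole) G) r := by
        simp only [decompose, h]
      have := ih _ _ _ hu
      rw [ECtx.plug, this, ← compE_assoc]
      simp [compE]
  | appL F t ih =>
      intro u G r h
      have hu : decompose (app u t) = .red (compE (.appL .hole t) G) r := by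
        simp only [decompose, h]
      have := ih _ _ _ hu
      rw [ECtx.plug, this, ← compE_assoc]
      simp [compE]
  | resetC F ih =>
      intro u G r h
      have hu : decompose (reset u) = .red (compE (.resetC .hole) G) r := by
        simp only [decompose, h]
      have := ih _ _ _ hu
      rw [ECtx.plug, this, ← compE_assoc]
      simp [compE]

lemma L0 (E : PCtx) (s : Tm) : decompose (E.plug (shift s)) = .stuck E s := by
  have := Mstuck E (shift s) .hole s (by simp [decompose])
  simpa [PCtx.comp] using this

lemma decompose_redex {r : Tm} (hr : IsRedex r) : decompose r = .red .hole r := by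
  rcases hr with ⟨t, v, ⟨b, hb⟩, rfl⟩ | ⟨E, s, rfl⟩ | ⟨v, ⟨b, hb⟩, rfl⟩
  · subst hb; simp [decompose]
  · unfold decompose; rw [L0]
  · subst hb; simp [decompose]

lemma L_red (F : ECtx) {r : Tm} (hr : IsRedex r) : decompose (F.plug r) = .red F r := by
  have := Mred F r .hole r (decompose_redex hr)
  simpa [compE] using this

lemma redex_red (F : ECtx) {r : Tm} (hr : IsRedex r) : ∃ u, Red (F.plug r) u := by
  rcases hr with ⟨t, v, hv, rfl⟩ | ⟨E, s, rfl⟩ | ⟨v, hv, rfl⟩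
  · exact ⟨_, Red.beta F t v hv⟩
  · exact ⟨_, Red.cap F E s⟩
  · exact ⟨_, Red.res F v hv⟩

lemma red_decompose {t u : Tm} (h : Red t u) :
    ∃ (F : ECtx) (r : Tm), IsRedex r ∧ t = F.plug r := by
  cases h with
  | beta F t v hv => exact ⟨F, _, Or.inl ⟨t, v, hv, rfl⟩, rfl⟩
  | cap F E s => exact ⟨F, _, Or.inr (Or.inl ⟨E, s, rfl⟩), rfl⟩
  | res F v hv => exact ⟨F, _, Or.inr (Or.inr ⟨v, hv, rfl⟩), rfl⟩

end LamS
open LamS LamS.Tm in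
/-- unique decomposition and determinism of reduction. -/
theorem unique_decomposition_and_determinism :
    ∀ t : Tm, Closed t →
      ((IsValue t ∨ Stuck t ∨
          (∃! p : ECtx × Tm, IsRedex p.2 ∧ t = p.1.plug p.2)) ∧
        ¬ (IsValue t ∧ Stuck t) ∧
        ¬ (IsValue t ∧ ∃! p : ECtx × Tm, IsRedex p.2 ∧ t = p.1.plug p.2) ∧
        ¬ (Stuck t ∧ ∃! p : ECtx × Tm, IsRedex p.2 ∧ t = p.1.plug p.2) ∧
        ∀ u1 u2, Red t u1 → Red t u2 → u1 = u2) := by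
  have key : ∀ (F1 F2 : ECtx) (r1 r2 : Tm), IsRedex r1 → IsRedex r2 →
      ECtx.plug F1 r1 = ECtx.plug F2 r2 → F1 = F2 ∧ r1 = r2 := by
    intro F1 F2 r1 r2 h1 h2 he
    have h3 : DRes.red F1 r1 = DRes.red F2 r2 := by
      rw [← L_red F1 h1, ← L_red F2 h2, he]
    injection h3 with a b; exact ⟨a, b⟩
  have keyP : ∀ (E1 E2 : PCtx) (s1 s2 : Tm),
      PCtx.plug E1 (shift s1) = PCtx.plug E2 (shift s2) → E1 = E2 ∧ s1 = s2 := by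
    intro E1 E2 s1 s2 he
    have h3 : DRes.stuck E1 s1 = DRes.stuck E2 s2 := by
      rw [← L0 E1 s1, ← L0 E2 s2, he]
    injection h3 with a b; exact ⟨a, b⟩
  intro t ht
  obtain ⟨sval, sstuck, sred⟩ := decompose_sound t
  have det : ∀ u1 u2, Red t u1 → Red t u2 → u1 = u2 := by
    intro u1 u2 h1 h2
    cases h1 with
    | beta F1 t1 v1 hv1 =>
      generalize he : ECtx.plug F1 (app (lam t1) v1) = tt at h2
      cases h2 with
      | beta F2 t2 v2 hv2 =>
          obtain ⟨rfl, hr⟩ := key F1 F2 _ _ (Or.inl ⟨_, _, hv1, rfl⟩)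
            (Or.inl ⟨_, _, hv2, rfl⟩) he
          injection hr with hr1 hr2
          injection hr1 with hr1
          subst hr1; subst hr2; rfl
      | cap F2 E2 s2 =>
          obtain ⟨rfl, hr⟩ := key F1 F2 _ _ (Or.inl ⟨_, _, hv1, rfl⟩)
            (Or.inr (Or.inl ⟨E2, s2, rfl⟩)) he
          cases hr
      | res F2 v2 hv2 =>
          obtain ⟨rfl, hr⟩ := key F1 F2 _ _ (Or.inl ⟨_, _, hv1, rfl⟩)
            (Or.inr (Or.inr ⟨v2, hv2, rfl⟩)) he
          cases hr
    | cap F1 E1 s1 =>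
      generalize he : ECtx.plug F1 (reset (PCtx.plug E1 (shift s1))) = tt at h2
      cases h2 with
      | beta F2 t2 v2 hv2 =>
          obtain ⟨rfl, hr⟩ := key F1 F2 _ _ (Or.inr (Or.inl ⟨E1, s1, rfl⟩))
            (Or.inl ⟨_, _, hv2, rfl⟩) he
          cases hr
      | cap F2 E2 s2 =>
          obtain ⟨rfl, hr⟩ := key F1 F2 _ _ (Or.inr (Or.inl ⟨E1, s1, rfl⟩))
            (Or.inr (Or.inl ⟨E2, s2, rfl⟩)) he
          injection hr with hr
          obtain ⟨rfl, rfl⟩ := keyP E1 E2 s1 s2 hr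
          rfl
      | res F2 v2 hv2 =>
          obtain ⟨rfl, hr⟩ := key F1 F2 _ _ (Or.inr (Or.inl ⟨E1, s1, rfl⟩))
            (Or.inr (Or.inr ⟨v2, hv2, rfl⟩)) he
          injection hr with hr
          obtain ⟨b, rfl⟩ := hv2
          have h4 := L0 E1 s1
          rw [hr] at h4
          simp [decompose] at h4
    | res F1 v1 hv1 =>
      generalize he : ECtx.plug F1 (reset v1) = tt at h2
      cases h2 with
      | beta F2 t2 v2 hv2 =>
          obtain ⟨rfl, hr⟩ := key F1 F2 _ _ (Or.inr (Or.inr ⟨v1, hv1, rfl⟩))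
            (Or.inl ⟨_, _, hv2, rfl⟩) he
          cases hr
      | cap F2 E2 s2 =>
          obtain ⟨rfl, hr⟩ := key F1 F2 _ _ (Or.inr (Or.inr ⟨v1, hv1, rfl⟩))
            (Or.inr (Or.inl ⟨E2, s2, rfl⟩)) he
          injection hr with hr
          obtain ⟨b, rfl⟩ := hv1
          have h4 := L0 E2 s2
          rw [← hr] at h4
          simp [decompose] at h4
      | res F2 v2 hv2 =>
          obtain ⟨rfl, hr⟩ := key F1 F2 _ _ (Or.inr (Or.inr ⟨v1, hv1, rfl⟩))
            (Or.inr (Or.inr ⟨v2, hv2, rfl⟩)) he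
          injection hr with hr
          subst hr; rfl
  refine ⟨?_, fun h => h.2.1 h.1, ?_, ?_, det⟩
  · cases hd : decompose t with
    | val b => exact Or.inl ⟨b, sval b hd⟩
    | stuck E s =>
        refine Or.inr (Or.inl ⟨?_, ?_⟩)
        · rintro ⟨b, rfl⟩; simp [decompose] at hd
        · intro u hu
          obtain ⟨F, r, hr, rfl⟩ := red_decompose hu
          rw [L_red F hr] at hd; cases hd
    | red F r =>
        obtain ⟨hr, hp⟩ := sred F r hd
        refine Or.inr (Or.inr ⟨(F, r), ⟨hr, hp⟩, ?_⟩)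
        rintro ⟨F', r'⟩ ⟨hr', hp'⟩
        have h3 := L_red F' hr'
        rw [← hp', hd] at h3
        cases h3; rfl
    | bad => exact absurd hd (decompose_not_bad t ht)
  · rintro ⟨⟨b, rfl⟩, ⟨⟨F, r⟩, ⟨hr, hp⟩, -⟩⟩
    have h3 := L_red F hr
    rw [← hp] at h3
    simp [decompose] at h3
  · rintro ⟨hs, ⟨⟨F, r⟩, ⟨hr, hp⟩, -⟩⟩
    obtain ⟨u, hu⟩ := redex_red F hr
    exact hs.2 u (hp ▸ hu)
end

section
/- The transitive closure of Howe's closure of applicative bisimilarity for λ_S, restricted appropriately, is symmetric: (H)* is a symmetric relation. -/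
namespace LamS
open Tm

theorem bisim_symm {t0 t1 : Tm} (h : Bisim t0 t1) : Bisim t1 t0 := by
  obtain ⟨R, ⟨h1, h2⟩, hr⟩ := h
  exact ⟨flip R, ⟨h2, h1⟩, hr⟩

theorem openExt_bisim_symm {t0 t1 : Tm} (h : OpenExt Bisim t0 t1) :
    OpenExt Bisim t1 t0 := fun σ hσ => bisim_symm (h σ hσ)

theorem howe_refl (t : Tm) : Howe t t := by
  induction t with
  | var n => exact .compVar n
  | lam t ih => exact .compLam ih
  | app a b iha ihb => exact .compApp iha ihb
  | shift t ih => exact .compShift ih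
  | reset t ih => exact .compReset ih

theorem rtg_lam {t0 t1 : Tm} (h : Relation.ReflTransGen Howe t0 t1) :
    Relation.ReflTransGen Howe (lam t0) (lam t1) := by
  induction h with
  | refl => exact .refl
  | tail _ hs ih => exact ih.tail (.compLam hs)

theorem rtg_shift {t0 t1 : Tm} (h : Relation.ReflTransGen Howe t0 t1) :
    Relation.ReflTransGen Howe (shift t0) (shift t1) := by
  induction h with
  | refl => exact .refl
  | tail _ hs ih => exact ih.tail (.compShift hs)

theorem rtg_reset {t0 t1 : Tm} (h : Relation.ReflTransGen Howe t0 t1) :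
    Relation.ReflTransGen Howe (reset t0) (reset t1) := by
  induction h with
  | refl => exact .refl
  | tail _ hs ih => exact ih.tail (.compReset hs)

theorem rtg_app {a0 a1 b0 b1 : Tm} (ha : Relation.ReflTransGen Howe a0 a1)
    (hb : Relation.ReflTransGen Howe b0 b1) :
    Relation.ReflTransGen Howe (app a0 b0) (app a1 b1) := by
  have h1 : Relation.ReflTransGen Howe (app a0 b0) (app a1 b0) := by
    induction ha with
    | refl => exact .refl
    | tail _ hs ih => exact ih.tail (.compApp hs (howe_refl b0))
  refine h1.trans ?_
  induction hb with
  | refl => exact .refl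
  | tail _ hs ih => exact ih.tail (.compApp (howe_refl a1) hs)

theorem howe_rev {t0 t1 : Tm} (h : Howe t0 t1) :
    Relation.ReflTransGen Howe t1 t0 := by
  induction h with
  | base h => exact .single (.base (openExt_bisim_symm h))
  | right _ h2 ih => exact (Relation.ReflTransGen.single (.base (openExt_bisim_symm h2))).trans ih
  | compVar n => exact .refl
  | compLam _ ih => exact rtg_lam ih
  | compApp _ _ iha ihb => exact rtg_app iha ihb
  | compShift _ ih => exact rtg_shift ih
  | compReset _ ih => exact rtg_reset ih

end LamS

open LamS LamS.Tm in
/-- the (reflexive-)transitive closure of Howe's closure is symmetric. -/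
theorem howe_star_symmetric :
    ∀ t0 t1 : Tm, Relation.ReflTransGen Howe t0 t1 → Relation.ReflTransGen Howe t1 t0 := by
  intro t0 t1 h
  induction h with
  | refl => exact .refl
  | tail _ hs ih => exact (howe_rev hs).trans ih
end
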